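/- Regard the numbers B^n_s as polynomials in the two variables A₁ and (c̃_0 - w) (via c̃_j - w = (c̃_0 - w) - jA₁). When evaluated at w = c̃_{k-1}, i.e., substituting c̃_0 - w = (k-1)A₁, the resulting number B^n_s is a homogeneous polynomial of degree |s| in A₁; equivalently, B^n_s |_{w=c̃_{k-1}} = A₁^{|s|} · P(n,s,k) for some quantity P independent of A₁. -/
import Mathlib

/-- `c̃_j = c̃_0 - j·A₁`. -/
noncomputable def ctilde (c0 A1 : ℝ) (j : ℕ) : ℝ := c0 - (j : ℝ) * A1

/-- total `|s| = ∑ s_i`. -/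
def totdeg (s : ℕ →₀ ℕ) : ℕ := s.sum fun _ v => v

/-- weighted `[s] = ∑ s_i (i+1)`. -/
def wdeg (s : ℕ →₀ ℕ) : ℕ := s.sum fun i v => v * (i + 1)

/-- `s - σ₀`: decrement `s₀` by one. -/
noncomputable def subσ₀ (s : ℕ →₀ ℕ) : ℕ →₀ ℕ := s.update 0 (s 0 - 1)

/-- `s - σᵢ` for `i ≥ 1`: increment `s_{i-1}`, decrement `s_i`. -/
noncomputable def subσ (s : ℕ →₀ ℕ) (i : ℕ) : ℕ →₀ ℕ :=
  (s.update (i - 1) (s (i - 1) + 1)).update i (s i - 1)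

/-- The recursion defining the numbers `B^n_s` (7.7). -/
def BRec (c0 A1 w : ℝ) (B : ℕ → (ℕ →₀ ℕ) → ℝ) : Prop :=
  B 0 0 = 1 ∧ (∀ s : ℕ →₀ ℕ, s ≠ 0 → B 0 s = 0) ∧
    ∀ n : ℕ, ∀ s : ℕ →₀ ℕ, 1 ≤ n →
      B n s =
        (if s 0 = 0 then 0 else
          ((n + totdeg s - 1 : ℕ) : ℝ) * (ctilde c0 A1 (n + totdeg s - 2) - w) *
            ∑ l ∈ Finset.range n, B l (subσ₀ s))
        + ∑ i ∈ s.support.filter (fun i => 1 ≤ i),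
            ((s (i - 1) : ℝ) + 1) * ∑ l ∈ Finset.range n, B l (subσ s i)

lemma totdeg_update (s : ℕ →₀ ℕ) (i a : ℕ) :
    totdeg (s.update i a) + s i = totdeg s + a := by
  simpa [totdeg] using Finsupp.sum_update_add (β := ℕ) s i a (fun _ v => v)
    (fun _ => rfl) (fun _ _ _ => rfl)

lemma le_totdeg (s : ℕ →₀ ℕ) (i : ℕ) : s i ≤ totdeg s := by
  by_cases h : s i = 0
  · omega
  · exact Finset.single_le_sum (f := fun j => s j) (fun _ _ => Nat.zero_le _)
      (Finsupp.mem_support_iff.mpr h)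

lemma totdeg_subσ₀ (s : ℕ →₀ ℕ) (h : s 0 ≠ 0) :
    totdeg (subσ₀ s) = totdeg s - 1 ∧ 1 ≤ totdeg s := by
  have := totdeg_update s 0 (s 0 - 1)
  have := le_totdeg s 0
  constructor <;> [unfold subσ₀; skip] <;> omega

lemma totdeg_subσ (s : ℕ →₀ ℕ) (i : ℕ) (hi : 1 ≤ i) (h : s i ≠ 0) :
    totdeg (subσ s i) = totdeg s := by
  have h1 := totdeg_update s (i - 1) (s (i - 1) + 1)
  have h2 := totdeg_update (s.update (i - 1) (s (i - 1) + 1)) i (s i - 1)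
  have hti : (s.update (i - 1) (s (i - 1) + 1)) i = s i := by
    classical
    rw [Finsupp.coe_update, Function.update_of_ne (by omega)]
  rw [hti] at h2
  unfold subσ
  omega

/-- Evaluated at `w = c̃_{k-1}`, the numbers `B^n_s` are homogeneous of degree `|s|` in `A₁`:
`B^n_s = A₁^{|s|} · P(n,s,k)` with `P` independent of `A₁`. -/
theorem stmt_12 (c0 : ℝ) (k : ℕ) (hk : 1 ≤ k)
    (B : ℝ → ℕ → (ℕ →₀ ℕ) → ℝ)
    (hB : ∀ A1 : ℝ, BRec c0 A1 (ctilde c0 A1 (k - 1)) (B A1)) :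
    ∀ (n : ℕ) (s : ℕ →₀ ℕ), ∃ P : ℝ, ∀ A1 : ℝ, B A1 n s = A1 ^ totdeg s * P := by
  have key : ∀ (n : ℕ) (s : ℕ →₀ ℕ) (A1 : ℝ),
      B A1 n s = A1 ^ totdeg s * B 1 n s := by
    intro n
    induction n using Nat.strong_induction_on with
    | _ n ih =>
      intro s A1
      obtain ⟨h10, h1s, h1rec⟩ := hB 1
      obtain ⟨hA0, hAs, hArec⟩ := hB A1
      match n with
      | 0 =>
        by_cases hs : s = 0
        · subst hs
          simp [hA0, h10, totdeg]
        · rw [hAs s hs, h1s s hs, mul_zero]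
      | Nat.succ m =>
        rw [hArec (m + 1) s (by omega), h1rec (m + 1) s (by omega)]
        have hsumi : ∀ i ∈ s.support.filter (fun i => 1 ≤ i),
            ((s (i - 1) : ℝ) + 1) * ∑ l ∈ Finset.range (m + 1), B A1 l (subσ s i)
            = A1 ^ totdeg s *
              (((s (i - 1) : ℝ) + 1) * ∑ l ∈ Finset.range (m + 1), B 1 l (subσ s i)) := by
          intro i hi
          simp only [Finset.mem_filter, Finsupp.mem_support_iff] at hi
          have hd := totdeg_subσ s i hi.2 hi.1
          rw [Finset.sum_congr rfl (fun l hl => ih l (Finset.mem_range.mp hl) _ A1)]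
          rw [hd, ← Finset.mul_sum]
          ring
        rw [Finset.sum_congr rfl hsumi, ← Finset.mul_sum]
        by_cases h0 : s 0 = 0
        · rw [if_pos h0, if_pos h0]
          ring
        · rw [if_neg h0, if_neg h0]
          obtain ⟨hd0, hd1⟩ := totdeg_subσ₀ s h0
          have hsum0 : ∑ l ∈ Finset.range (m + 1), B A1 l (subσ₀ s)
              = A1 ^ (totdeg s - 1) * ∑ l ∈ Finset.range (m + 1), B 1 l (subσ₀ s) := by
            rw [Finset.sum_congr rfl (fun l hl => ih l (Finset.mem_range.mp hl) _ A1)]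
            rw [hd0, ← Finset.mul_sum]
          rw [hsum0]
          have hct : ∀ j : ℕ, ctilde c0 A1 j - ctilde c0 A1 (k - 1)
              = (((k - 1 : ℕ) : ℝ) - (j : ℝ)) * A1 := by
            intro j; unfold ctilde; ring
          have hct1 : ∀ j : ℕ, ctilde c0 1 j - ctilde c0 1 (k - 1)
              = (((k - 1 : ℕ) : ℝ) - (j : ℝ)) := by
            intro j; unfold ctilde; ring
          rw [hct, hct1]
          have hpow : A1 * A1 ^ (totdeg s - 1) = A1 ^ totdeg s := by
            conv_rhs => rw [show totdeg s = (totdeg s - 1) + 1 by omega]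
            rw [pow_succ]; ring
          calc ((m + 1 + totdeg s - 1 : ℕ) : ℝ) *
                ((((k - 1 : ℕ) : ℝ) - ((m + 1 + totdeg s - 2 : ℕ) : ℝ)) * A1) *
                (A1 ^ (totdeg s - 1) * ∑ l ∈ Finset.range (m + 1), B 1 l (subσ₀ s))
              + A1 ^ totdeg s * ∑ i ∈ s.support.filter (fun i => 1 ≤ i),
                  ((s (i - 1) : ℝ) + 1) * ∑ l ∈ Finset.range (m + 1), B 1 l (subσ s i)
              = (A1 * A1 ^ (totdeg s - 1)) *
                (((m + 1 + totdeg s - 1 : ℕ) : ℝ) *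
                  (((k - 1 : ℕ) : ℝ) - ((m + 1 + totdeg s - 2 : ℕ) : ℝ)) *
                  ∑ l ∈ Finset.range (m + 1), B 1 l (subσ₀ s))
              + A1 ^ totdeg s * ∑ i ∈ s.support.filter (fun i => 1 ≤ i),
                  ((s (i - 1) : ℝ) + 1) * ∑ l ∈ Finset.range (m + 1), B 1 l (subσ s i) := by
                ring
            _ = _ := by rw [hpow]; ring
  intro n s
  exact ⟨B 1 n s, fun A1 => key n s A1⟩
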